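/- Manager profit is strictly positive at any fixed-fee equilibrium: let f satisfy 0 < f ≤ f_max, let L > 0 satisfy the fixed-fee zero-profit condition f·H0(f, L) = AP0(f) + r, and set R = (AP0(0) + r)·V(L). Then Π_MGR(R, L) ≥ (AP0(f) − AE0(f))·V(L) > 0. -/

import Mathlib

open Set Filter

/-- **Manager profit is strictly positive at a fixed-fee equilibrium (proof of Theorem 1).**
Let `0 < f ≤ fmax`, let `L > 0` satisfy the fixed-fee zero-profit condition
`f·H0(f,L) = AP0(f) + r`, and set `R = (AP0(0) + r)·V(L)` with `V(L) = 2·√P·L`. Then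
`Π_MGR(R,L) ≥ (AP0(f) − AE0(f))·V(L) > 0`, where
`Π_MGR(R,L) = (max_{g ∈ [0,fmax]} (g·H0(g,L) + AP0(0) − AE0(g)))·V(L) − R`. -/
theorem manager_profit_pos_at_ff_equilibrium
    (fmax r P : ℝ) (hfmax : 0 < fmax) (hr : 0 < r) (hP : 0 < P)
    (H0 : ℝ → ℝ → ℝ)
    (hH0cont : ContinuousOn (fun p : ℝ × ℝ => H0 p.1 p.2) (Icc 0 fmax ×ˢ Ioi 0))
    (hH0f : ∀ L : ℝ, 0 < L → AntitoneOn (fun f => H0 f L) (Icc 0 fmax))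
    (AP0 : ℝ → ℝ)
    (hAP0cont : ContinuousOn AP0 (Icc 0 fmax))
    (hAP0nonneg : ∀ f ∈ Icc (0:ℝ) fmax, 0 ≤ AP0 f)
    (hAP0anti : AntitoneOn AP0 (Icc 0 fmax))
    (AE0 : ℝ → ℝ)
    (hAE0cont : ContinuousOn AE0 (Icc 0 fmax))
    (hAE0nonneg : ∀ f ∈ Icc (0:ℝ) fmax, 0 ≤ AE0 f)
    (hAE0anti : AntitoneOn AE0 (Icc 0 fmax))
    (hAE0le : ∀ f ∈ Icc (0:ℝ) fmax, AE0 f ≤ AP0 f)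
    (hAE0lt : ∀ f ∈ Icc (0:ℝ) fmax, 0 < f → AE0 f < AP0 f)
    (f L : ℝ) (hf : 0 < f) (hffmax : f ≤ fmax) (hL : 0 < L)
    (heq : f * H0 f L = AP0 f + r) :
    (AP0 f - AE0 f) * (2 * Real.sqrt P * L) ≤
      (sSup ((fun g => g * H0 g L + AP0 0 - AE0 g) '' Icc 0 fmax))
        * (2 * Real.sqrt P * L) - (AP0 0 + r) * (2 * Real.sqrt P * L) ∧
    0 < (AP0 f - AE0 f) * (2 * Real.sqrt P * L) := by
  have hV : 0 < 2 * Real.sqrt P * L := by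
    have := Real.sqrt_pos.mpr hP
    positivity
  have hfmem : f ∈ Icc (0:ℝ) fmax := ⟨hf.le, hffmax⟩
  set φ : ℝ → ℝ := fun g => g * H0 g L + AP0 0 - AE0 g with hφ
  have hcont : ContinuousOn φ (Icc 0 fmax) := by
    apply ContinuousOn.sub _ hAE0cont
    apply ContinuousOn.add _ continuousOn_const
    exact continuousOn_id.mul
      (hH0cont.comp (s := Icc 0 fmax) (f := fun g : ℝ => (g, L)) (continuousOn_id.prodMk continuousOn_const)
        (fun g hg => ⟨hg, mem_Ioi.mpr hL⟩))
  have hbdd : BddAbove (φ '' Icc 0 fmax) :=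
    (isCompact_Icc.image_of_continuousOn hcont).bddAbove
  have hle : φ f ≤ sSup (φ '' Icc 0 fmax) := le_csSup hbdd ⟨f, hfmem, rfl⟩
  have hφf : φ f = AP0 f + r + AP0 0 - AE0 f := by
    simp only [hφ, heq]
  have hpos : 0 < AP0 f - AE0 f := sub_pos.mpr (hAE0lt f hfmem hf)
  constructor
  · have h1 : AP0 f - AE0 f ≤ sSup (φ '' Icc 0 fmax) - (AP0 0 + r) := by
      rw [hφf] at hle; linarith
    have := mul_le_mul_of_nonneg_right h1 hV.le
    nlinarith [this]
  · exact mul_pos hpos hV
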